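/- (Remark 3.1) The sets in the two geometric lemmas can be chosen compatibly: there exist finite disjoint sets Λ_Ξ, Λ_v ⊆ S² ∩ ℚ³, for each ξ ∈ Λ_Ξ ∪ Λ_v vectors ξ₁, ξ₂ ∈ ℝ³ with (ξ, ξ₁, ξ₂) an orthonormal basis of ℝ³ and such that distinct ξ ≠ ξ′ in Λ_Ξ ∪ Λ_v have ξ₁ ≠ ξ₁′, constants ε_Ξ, ε_v > 0 and smooth strictly positive functions γ_ξ realizing the decompositions A = Σ_{ξ∈Λ_Ξ} (γ_ξ(A))²(ξ ⊗ ξ₂ − ξ₂ ⊗ ξ) for all skew-symmetric A with |A| < ε_Ξ and A = Σ_{ξ∈Λ_v} (γ_ξ(A))²(ξ ⊗ ξ) for all symmetric A with |A − Id| < ε_v, and moreover a positive integer N_Λ such that N_Λ ξ, N_Λ ξ₁, N_Λ ξ₂ ∈ ℤ³ for every ξ ∈ Λ_Ξ ∪ Λ_v. -/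

import Mathlib

open scoped Matrix

/- Frobenius norm and normed-space structure on 3×3 real matrices. -/
attribute [local instance] Matrix.frobeniusNormedAddCommGroup Matrix.frobeniusNormedSpace

/-- Outer product of two vectors in ℝ³: `(u ⊗ w)ᵢⱼ = uᵢ wⱼ`. -/
def outer (u w : Fin 3 → ℝ) : Matrix (Fin 3) (Fin 3) ℝ := fun i j => u i * w j

/-- A vector in ℝ³ has rational coordinates. -/
def IsRationalVec (u : Fin 3 → ℝ) : Prop := ∀ i, ∃ q : ℚ, u i = (q : ℝ)

/-- Euclidean dot product on ℝ³. -/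
def dot3 (u v : Fin 3 → ℝ) : ℝ := ∑ i, u i * v i

/-- `(u, v, w)` is an orthonormal basis of ℝ³ (three pairwise-orthogonal unit vectors). -/
def OrthonormalTriple (u v w : Fin 3 → ℝ) : Prop :=
  dot3 u u = 1 ∧ dot3 v v = 1 ∧ dot3 w w = 1 ∧
  dot3 u v = 0 ∧ dot3 u w = 0 ∧ dot3 v w = 0

/-- A vector `u` becomes integral after multiplication by `N`. -/
def IsIntegralAfterScaling (N : ℕ) (u : Fin 3 → ℝ) : Prop :=
  ∀ i, ∃ z : ℤ, (N : ℝ) * u i = (z : ℝ)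

/- ### Auxiliary construction -/

noncomputable section GrAux

/-- An injective "key" separating the twelve direction vectors used below. -/
def grKey (ξ : Fin 3 → ℝ) : ℝ := ξ 0 + 5 * ξ 1 + 25 * ξ 2

def grE1 : (Fin 3 → ℝ) → (Fin 3 → ℝ) := fun ξ =>
  if grKey ξ = 1 then ![0,0,1]
  else if grKey ξ = -1 then ![0,0,-1]
  else if grKey ξ = 5 then ![1,0,0]
  else if grKey ξ = -5 then ![-1,0,0]
  else if grKey ξ = 25 then ![0,1,0]
  else if grKey ξ = -25 then ![0,-1,0]
  else if grKey ξ = 23/5 then ![-4/5,3/5,0]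
  else if grKey ξ = -17/5 then ![4/5,3/5,0]
  else if grKey ξ = 23 then ![0,-4/5,3/5]
  else if grKey ξ = -17 then ![0,4/5,3/5]
  else if grKey ξ = 79/5 then ![3/5,0,-4/5]
  else if grKey ξ = 71/5 then ![3/5,0,4/5]
  else 0

def grE2 : (Fin 3 → ℝ) → (Fin 3 → ℝ) := fun ξ =>
  if grKey ξ = 1 ∨ grKey ξ = -1 then ![0,1,0]
  else if grKey ξ = 5 ∨ grKey ξ = -5 then ![0,0,1]
  else if grKey ξ = 25 ∨ grKey ξ = -25 then ![1,0,0]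
  else if grKey ξ = 23/5 ∨ grKey ξ = -17/5 then ![0,0,1]
  else if grKey ξ = 23 ∨ grKey ξ = -17 then ![1,0,0]
  else if grKey ξ = 79/5 ∨ grKey ξ = 71/5 then ![0,1,0]
  else 0

def grGamma : (Fin 3 → ℝ) → Matrix (Fin 3) (Fin 3) ℝ → ℝ := fun ξ A =>
  if grKey ξ = 1 then Real.sqrt (1/2 + A 0 1 / 2)
  else if grKey ξ = -1 then Real.sqrt (1/2 - A 0 1 / 2)
  else if grKey ξ = 5 then Real.sqrt (1/2 + A 1 2 / 2)
  else if grKey ξ = -5 then Real.sqrt (1/2 - A 1 2 / 2)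
  else if grKey ξ = 25 then Real.sqrt (1/2 - A 0 2 / 2)
  else if grKey ξ = -25 then Real.sqrt (1/2 + A 0 2 / 2)
  else if grKey ξ = 23/5 then
    Real.sqrt ((81 * A 0 0 + 256 * A 1 1 - 144 * A 2 2)/386 + 25/24 * A 0 1)
  else if grKey ξ = -17/5 then
    Real.sqrt ((81 * A 0 0 + 256 * A 1 1 - 144 * A 2 2)/386 - 25/24 * A 0 1)
  else if grKey ξ = 23 then
    Real.sqrt ((-144 * A 0 0 + 81 * A 1 1 + 256 * A 2 2)/386 + 25/24 * A 1 2)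
  else if grKey ξ = -17 then
    Real.sqrt ((-144 * A 0 0 + 81 * A 1 1 + 256 * A 2 2)/386 - 25/24 * A 1 2)
  else if grKey ξ = 79/5 then
    Real.sqrt ((256 * A 0 0 - 144 * A 1 1 + 81 * A 2 2)/386 + 25/24 * A 0 2)
  else if grKey ξ = 71/5 then
    Real.sqrt ((256 * A 0 0 - 144 * A 1 1 + 81 * A 2 2)/386 - 25/24 * A 0 2)
  else 1

/- evaluation lemmas -/
lemma grE1_e1 : grE1 ![1,0,0] = ![0,0,1] := by norm_num [grE1, grKey, Matrix.cons_val_two, Matrix.tail_cons, Matrix.head_cons]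
lemma grE1_e1' : grE1 ![-1,0,0] = ![0,0,-1] := by norm_num [grE1, grKey, Matrix.cons_val_two, Matrix.tail_cons, Matrix.head_cons]
lemma grE1_e2 : grE1 ![0,1,0] = ![1,0,0] := by norm_num [grE1, grKey, Matrix.cons_val_two, Matrix.tail_cons, Matrix.head_cons]
lemma grE1_e2' : grE1 ![0,-1,0] = ![-1,0,0] := by norm_num [grE1, grKey, Matrix.cons_val_two, Matrix.tail_cons, Matrix.head_cons]
lemma grE1_e3 : grE1 ![0,0,1] = ![0,1,0] := by norm_num [grE1, grKey, Matrix.cons_val_two, Matrix.tail_cons, Matrix.head_cons]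
lemma grE1_e3' : grE1 ![0,0,-1] = ![0,-1,0] := by norm_num [grE1, grKey, Matrix.cons_val_two, Matrix.tail_cons, Matrix.head_cons]
lemma grE1_v1 : grE1 ![3/5,4/5,0] = ![-4/5,3/5,0] := by norm_num [grE1, grKey, Matrix.cons_val_two, Matrix.tail_cons, Matrix.head_cons]
lemma grE1_v2 : grE1 ![3/5,-4/5,0] = ![4/5,3/5,0] := by norm_num [grE1, grKey, Matrix.cons_val_two, Matrix.tail_cons, Matrix.head_cons]
lemma grE1_v3 : grE1 ![0,3/5,4/5] = ![0,-4/5,3/5] := by norm_num [grE1, grKey, Matrix.cons_val_two, Matrix.tail_cons, Matrix.head_cons]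
lemma grE1_v4 : grE1 ![0,3/5,-4/5] = ![0,4/5,3/5] := by norm_num [grE1, grKey, Matrix.cons_val_two, Matrix.tail_cons, Matrix.head_cons]
lemma grE1_v5 : grE1 ![4/5,0,3/5] = ![3/5,0,-4/5] := by norm_num [grE1, grKey, Matrix.cons_val_two, Matrix.tail_cons, Matrix.head_cons]
lemma grE1_v6 : grE1 ![-4/5,0,3/5] = ![3/5,0,4/5] := by norm_num [grE1, grKey, Matrix.cons_val_two, Matrix.tail_cons, Matrix.head_cons]

lemma grE2_e1 : grE2 ![1,0,0] = ![0,1,0] := by norm_num [grE2, grKey, Matrix.cons_val_two, Matrix.tail_cons, Matrix.head_cons]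
lemma grE2_e1' : grE2 ![-1,0,0] = ![0,1,0] := by norm_num [grE2, grKey, Matrix.cons_val_two, Matrix.tail_cons, Matrix.head_cons]
lemma grE2_e2 : grE2 ![0,1,0] = ![0,0,1] := by norm_num [grE2, grKey, Matrix.cons_val_two, Matrix.tail_cons, Matrix.head_cons]
lemma grE2_e2' : grE2 ![0,-1,0] = ![0,0,1] := by norm_num [grE2, grKey, Matrix.cons_val_two, Matrix.tail_cons, Matrix.head_cons]
lemma grE2_e3 : grE2 ![0,0,1] = ![1,0,0] := by norm_num [grE2, grKey, Matrix.cons_val_two, Matrix.tail_cons, Matrix.head_cons]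
lemma grE2_e3' : grE2 ![0,0,-1] = ![1,0,0] := by norm_num [grE2, grKey, Matrix.cons_val_two, Matrix.tail_cons, Matrix.head_cons]
lemma grE2_v1 : grE2 ![3/5,4/5,0] = ![0,0,1] := by norm_num [grE2, grKey, Matrix.cons_val_two, Matrix.tail_cons, Matrix.head_cons]
lemma grE2_v2 : grE2 ![3/5,-4/5,0] = ![0,0,1] := by norm_num [grE2, grKey, Matrix.cons_val_two, Matrix.tail_cons, Matrix.head_cons]
lemma grE2_v3 : grE2 ![0,3/5,4/5] = ![1,0,0] := by norm_num [grE2, grKey, Matrix.cons_val_two, Matrix.tail_cons, Matrix.head_cons]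
lemma grE2_v4 : grE2 ![0,3/5,-4/5] = ![1,0,0] := by norm_num [grE2, grKey, Matrix.cons_val_two, Matrix.tail_cons, Matrix.head_cons]
lemma grE2_v5 : grE2 ![4/5,0,3/5] = ![0,1,0] := by norm_num [grE2, grKey, Matrix.cons_val_two, Matrix.tail_cons, Matrix.head_cons]
lemma grE2_v6 : grE2 ![-4/5,0,3/5] = ![0,1,0] := by norm_num [grE2, grKey, Matrix.cons_val_two, Matrix.tail_cons, Matrix.head_cons]

lemma grGamma_e1 : grGamma ![1,0,0] = fun A => Real.sqrt (1/2 + A 0 1 / 2) := by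
  funext A; norm_num [grGamma, grKey, Matrix.cons_val_two, Matrix.tail_cons, Matrix.head_cons]
lemma grGamma_e1' : grGamma ![-1,0,0] = fun A => Real.sqrt (1/2 - A 0 1 / 2) := by
  funext A; norm_num [grGamma, grKey, Matrix.cons_val_two, Matrix.tail_cons, Matrix.head_cons]
lemma grGamma_e2 : grGamma ![0,1,0] = fun A => Real.sqrt (1/2 + A 1 2 / 2) := by
  funext A; norm_num [grGamma, grKey, Matrix.cons_val_two, Matrix.tail_cons, Matrix.head_cons]
lemma grGamma_e2' : grGamma ![0,-1,0] = fun A => Real.sqrt (1/2 - A 1 2 / 2) := by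
  funext A; norm_num [grGamma, grKey, Matrix.cons_val_two, Matrix.tail_cons, Matrix.head_cons]
lemma grGamma_e3 : grGamma ![0,0,1] = fun A => Real.sqrt (1/2 - A 0 2 / 2) := by
  funext A; norm_num [grGamma, grKey, Matrix.cons_val_two, Matrix.tail_cons, Matrix.head_cons]
lemma grGamma_e3' : grGamma ![0,0,-1] = fun A => Real.sqrt (1/2 + A 0 2 / 2) := by
  funext A; norm_num [grGamma, grKey, Matrix.cons_val_two, Matrix.tail_cons, Matrix.head_cons]
lemma grGamma_v1 : grGamma ![3/5,4/5,0]
    = fun A => Real.sqrt ((81 * A 0 0 + 256 * A 1 1 - 144 * A 2 2)/386 + 25/24 * A 0 1) := by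
  funext A; norm_num [grGamma, grKey, Matrix.cons_val_two, Matrix.tail_cons, Matrix.head_cons]
lemma grGamma_v2 : grGamma ![3/5,-4/5,0]
    = fun A => Real.sqrt ((81 * A 0 0 + 256 * A 1 1 - 144 * A 2 2)/386 - 25/24 * A 0 1) := by
  funext A; norm_num [grGamma, grKey, Matrix.cons_val_two, Matrix.tail_cons, Matrix.head_cons]
lemma grGamma_v3 : grGamma ![0,3/5,4/5]
    = fun A => Real.sqrt ((-144 * A 0 0 + 81 * A 1 1 + 256 * A 2 2)/386 + 25/24 * A 1 2) := by
  funext A; norm_num [grGamma, grKey, Matrix.cons_val_two, Matrix.tail_cons, Matrix.head_cons]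
lemma grGamma_v4 : grGamma ![0,3/5,-4/5]
    = fun A => Real.sqrt ((-144 * A 0 0 + 81 * A 1 1 + 256 * A 2 2)/386 - 25/24 * A 1 2) := by
  funext A; norm_num [grGamma, grKey, Matrix.cons_val_two, Matrix.tail_cons, Matrix.head_cons]
lemma grGamma_v5 : grGamma ![4/5,0,3/5]
    = fun A => Real.sqrt ((256 * A 0 0 - 144 * A 1 1 + 81 * A 2 2)/386 + 25/24 * A 0 2) := by
  funext A; norm_num [grGamma, grKey, Matrix.cons_val_two, Matrix.tail_cons, Matrix.head_cons]
lemma grGamma_v6 : grGamma ![-4/5,0,3/5]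
    = fun A => Real.sqrt ((256 * A 0 0 - 144 * A 1 1 + 81 * A 2 2)/386 - 25/24 * A 0 2) := by
  funext A; norm_num [grGamma, grKey, Matrix.cons_val_two, Matrix.tail_cons, Matrix.head_cons]

lemma grEntryLe (A : Matrix (Fin 3) (Fin 3) ℝ) (i j : Fin 3) : |A i j| ≤ ‖A‖ := by
  rw [Matrix.frobenius_norm_def, ← Real.sqrt_eq_rpow]
  have h1 : |A i j| = Real.sqrt (‖A i j‖^(2:ℝ)) := by
    rw [show ((2:ℝ)) = ((2:ℕ):ℝ) by norm_num, Real.rpow_natCast, Real.sqrt_sq_eq_abs]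
    simp [Real.norm_eq_abs]
  rw [h1]
  apply Real.sqrt_le_sqrt
  calc ‖A i j‖^(2:ℝ) ≤ ∑ j', ‖A i j'‖^(2:ℝ) :=
        Finset.single_le_sum (f := fun j' => ‖A i j'‖^(2:ℝ))
          (fun _ _ => by positivity) (Finset.mem_univ j)
    _ ≤ ∑ i', ∑ j', ‖A i' j'‖^(2:ℝ) :=
        Finset.single_le_sum (f := fun i' => ∑ j', ‖A i' j'‖^(2:ℝ))
          (fun _ _ => by positivity) (Finset.mem_univ i)

lemma grEntryCD (i j : Fin 3) :
    ContDiff ℝ (⊤:ℕ∞) (fun A : Matrix (Fin 3) (Fin 3) ℝ => A i j) := by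
  let f : Matrix (Fin 3) (Fin 3) ℝ →ₗ[ℝ] ℝ :=
    { toFun := fun A => A i j, map_add' := fun _ _ => rfl, map_smul' := fun _ _ => rfl }
  exact f.toContinuousLinearMap.contDiff

lemma grSqrtCD {g : Matrix (Fin 3) (Fin 3) ℝ → ℝ} (hg : ContDiff ℝ (⊤:ℕ∞) g)
    {s : Set (Matrix (Fin 3) (Fin 3) ℝ)} (h : ∀ A ∈ s, g A ≠ 0) :
    ContDiffOn ℝ (⊤:ℕ∞) (fun A => Real.sqrt (g A)) s := fun A hA =>
  ((Real.contDiffAt_sqrt (h A hA)).comp A hg.contDiffAt).contDiffWithinAt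

lemma grRat (a b c : ℚ) (u : Fin 3 → ℝ) (h : u = ![(a:ℝ),(b:ℝ),(c:ℝ)]) : IsRationalVec u := by
  subst h; intro i; fin_cases i
  · exact ⟨a, by norm_num⟩
  · exact ⟨b, by norm_num⟩
  · exact ⟨c, by norm_num⟩

lemma grInt (a b c : ℤ) (u : Fin 3 → ℝ) (h : u = ![(a:ℝ)/5,(b:ℝ)/5,(c:ℝ)/5]) :
    IsIntegralAfterScaling 5 u := by
  subst h; intro i; fin_cases i
  · exact ⟨a, by norm_num; ring⟩
  · exact ⟨b, by norm_num; ring⟩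
  · exact ⟨c, by norm_num; ring⟩

end GrAux

set_option maxHeartbeats 2000000 in
/-- **Remark 3.1.** The two geometric lemmas can be realized compatibly: there are finite
disjoint sets `Λ_Ξ, Λ_v ⊆ S² ∩ ℚ³`, orthonormal bases `(ξ, ξ₁, ξ₂)` with the `ξ₁`'s pairwise
distinct across `Λ_Ξ ∪ Λ_v`, radii `ε_Ξ, ε_v > 0` with smooth positive amplitude functions
realizing the skew-symmetric and symmetric decompositions, and a positive integer `N_Λ` such
that `N_Λ ξ, N_Λ ξ₁, N_Λ ξ₂ ∈ ℤ³` for every `ξ ∈ Λ_Ξ ∪ Λ_v`. -/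
theorem geometric_lemmas_compatible :
    ∃ (ΛΞ Λv : Finset (Fin 3 → ℝ)) (e₁ e₂ : (Fin 3 → ℝ) → (Fin 3 → ℝ)) (εΞ εv : ℝ)
      (γ : (Fin 3 → ℝ) → Matrix (Fin 3) (Fin 3) ℝ → ℝ) (NΛ : ℕ),
      Disjoint ΛΞ Λv ∧ 0 < εΞ ∧ 0 < εv ∧ 0 < NΛ ∧
      (∀ ξ, ξ ∈ ΛΞ ∨ ξ ∈ Λv → IsRationalVec ξ ∧ OrthonormalTriple ξ (e₁ ξ) (e₂ ξ)) ∧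
      (∀ ξ, ξ ∈ ΛΞ ∨ ξ ∈ Λv → ∀ ξ', ξ' ∈ ΛΞ ∨ ξ' ∈ Λv → ξ ≠ ξ' → e₁ ξ ≠ e₁ ξ') ∧
      (∀ ξ ∈ ΛΞ,
        ContDiffOn ℝ (⊤ : ℕ∞) (γ ξ)
          {A : Matrix (Fin 3) (Fin 3) ℝ | Aᵀ = -A ∧ ‖A‖ < εΞ} ∧
        ∀ A : Matrix (Fin 3) (Fin 3) ℝ, Aᵀ = -A → ‖A‖ < εΞ → 0 < γ ξ A) ∧
      (∀ ξ ∈ Λv,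
        ContDiffOn ℝ (⊤ : ℕ∞) (γ ξ)
          {A : Matrix (Fin 3) (Fin 3) ℝ | Aᵀ = A ∧ ‖A - 1‖ < εv} ∧
        ∀ A : Matrix (Fin 3) (Fin 3) ℝ, Aᵀ = A → ‖A - 1‖ < εv → 0 < γ ξ A) ∧
      (∀ A : Matrix (Fin 3) (Fin 3) ℝ, Aᵀ = -A → ‖A‖ < εΞ →
        A = ∑ ξ ∈ ΛΞ, (γ ξ A) ^ 2 • (outer ξ (e₂ ξ) - outer (e₂ ξ) ξ)) ∧
      (∀ A : Matrix (Fin 3) (Fin 3) ℝ, Aᵀ = A → ‖A - 1‖ < εv →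
        A = ∑ ξ ∈ Λv, (γ ξ A) ^ 2 • outer ξ ξ) ∧
      (∀ ξ, ξ ∈ ΛΞ ∨ ξ ∈ Λv →
        IsIntegralAfterScaling NΛ ξ ∧ IsIntegralAfterScaling NΛ (e₁ ξ) ∧
          IsIntegralAfterScaling NΛ (e₂ ξ)) := by
  classical
  refine ⟨{![1,0,0], ![-1,0,0], ![0,1,0], ![0,-1,0], ![0,0,1], ![0,0,-1]},
    {![3/5,4/5,0], ![3/5,-4/5,0], ![0,3/5,4/5], ![0,3/5,-4/5], ![4/5,0,3/5], ![-4/5,0,3/5]},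
    grE1, grE2, 1/2, 1/5, grGamma, 5,
    ?_, by norm_num, by norm_num, by norm_num, ?_, ?_, ?_, ?_, ?_, ?_, ?_⟩
  · -- Disjoint
    rw [Finset.disjoint_left]
    intro a ha hb
    simp only [Finset.mem_insert, Finset.mem_singleton] at ha hb
    rcases ha with h|h|h|h|h|h <;> subst h <;>
      norm_num [funext_iff, Fin.forall_fin_succ] at hb
  · -- rational & orthonormal
    intro ξ h
    simp only [Finset.mem_insert, Finset.mem_singleton] at h
    rcases h with (h|h|h|h|h|h)|(h|h|h|h|h|h) <;> subst h
    · exact ⟨grRat 1 0 0 _ (by norm_num),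
        by rw [grE1_e1, grE2_e1]; norm_num [OrthonormalTriple, dot3, Fin.sum_univ_three, Matrix.cons_val_two, Matrix.tail_cons, Matrix.head_cons]⟩
    · exact ⟨grRat (-1) 0 0 _ (by norm_num),
        by rw [grE1_e1', grE2_e1']; norm_num [OrthonormalTriple, dot3, Fin.sum_univ_three, Matrix.cons_val_two, Matrix.tail_cons, Matrix.head_cons]⟩
    · exact ⟨grRat 0 1 0 _ (by norm_num),
        by rw [grE1_e2, grE2_e2]; norm_num [OrthonormalTriple, dot3, Fin.sum_univ_three, Matrix.cons_val_two, Matrix.tail_cons, Matrix.head_cons]⟩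
    · exact ⟨grRat 0 (-1) 0 _ (by norm_num),
        by rw [grE1_e2', grE2_e2']; norm_num [OrthonormalTriple, dot3, Fin.sum_univ_three, Matrix.cons_val_two, Matrix.tail_cons, Matrix.head_cons]⟩
    · exact ⟨grRat 0 0 1 _ (by norm_num),
        by rw [grE1_e3, grE2_e3]; norm_num [OrthonormalTriple, dot3, Fin.sum_univ_three, Matrix.cons_val_two, Matrix.tail_cons, Matrix.head_cons]⟩
    · exact ⟨grRat 0 0 (-1) _ (by norm_num),
        by rw [grE1_e3', grE2_e3']; norm_num [OrthonormalTriple, dot3, Fin.sum_univ_three, Matrix.cons_val_two, Matrix.tail_cons, Matrix.head_cons]⟩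
    · exact ⟨grRat (3/5) (4/5) 0 _ (by norm_num),
        by rw [grE1_v1, grE2_v1]; norm_num [OrthonormalTriple, dot3, Fin.sum_univ_three, Matrix.cons_val_two, Matrix.tail_cons, Matrix.head_cons]⟩
    · exact ⟨grRat (3/5) (-4/5) 0 _ (by norm_num),
        by rw [grE1_v2, grE2_v2]; norm_num [OrthonormalTriple, dot3, Fin.sum_univ_three, Matrix.cons_val_two, Matrix.tail_cons, Matrix.head_cons]⟩
    · exact ⟨grRat 0 (3/5) (4/5) _ (by norm_num),
        by rw [grE1_v3, grE2_v3]; norm_num [OrthonormalTriple, dot3, Fin.sum_univ_three, Matrix.cons_val_two, Matrix.tail_cons, Matrix.head_cons]⟩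
    · exact ⟨grRat 0 (3/5) (-4/5) _ (by norm_num),
        by rw [grE1_v4, grE2_v4]; norm_num [OrthonormalTriple, dot3, Fin.sum_univ_three, Matrix.cons_val_two, Matrix.tail_cons, Matrix.head_cons]⟩
    · exact ⟨grRat (4/5) 0 (3/5) _ (by norm_num),
        by rw [grE1_v5, grE2_v5]; norm_num [OrthonormalTriple, dot3, Fin.sum_univ_three, Matrix.cons_val_two, Matrix.tail_cons, Matrix.head_cons]⟩
    · exact ⟨grRat (-4/5) 0 (3/5) _ (by norm_num),
        by rw [grE1_v6, grE2_v6]; norm_num [OrthonormalTriple, dot3, Fin.sum_univ_three, Matrix.cons_val_two, Matrix.tail_cons, Matrix.head_cons]⟩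
  · -- distinct ξ₁'s
    intro ξ h ξ' h' hne
    simp only [Finset.mem_insert, Finset.mem_singleton] at h h'
    rcases h with (h|h|h|h|h|h)|(h|h|h|h|h|h) <;> subst h <;>
      rcases h' with (h'|h'|h'|h'|h'|h')|(h'|h'|h'|h'|h'|h') <;> subst h' <;>
      first
        | exact absurd rfl hne
        | (simp only [grE1_e1, grE1_e1', grE1_e2, grE1_e2', grE1_e3, grE1_e3',
            grE1_v1, grE1_v2, grE1_v3, grE1_v4, grE1_v5, grE1_v6];
           norm_num [funext_iff, Fin.forall_fin_succ])
  · -- skew γ: smooth and positive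
    intro ξ h
    simp only [Finset.mem_insert, Finset.mem_singleton] at h
    have bp : ∀ (A : Matrix (Fin 3) (Fin 3) ℝ) (i j : Fin 3), ‖A‖ < 1/2 →
        0 < 1/2 + A i j / 2 ∧ 0 < 1/2 - A i j / 2 := by
      intro A i j hn
      obtain ⟨c1, c2⟩ := abs_lt.mp (lt_of_le_of_lt (grEntryLe A i j) hn)
      constructor <;> linarith
    rcases h with h|h|h|h|h|h <;> subst h
    · rw [grGamma_e1]
      exact ⟨grSqrtCD (g := fun A => 1/2 + A 0 1 / 2)
          (contDiff_const.add ((grEntryCD 0 1).div_const 2))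
          (fun A hA => ((bp A 0 1 hA.2).1).ne'),
        fun A _ hn => Real.sqrt_pos.mpr (bp A 0 1 hn).1⟩
    · rw [grGamma_e1']
      exact ⟨grSqrtCD (g := fun A => 1/2 - A 0 1 / 2)
          (contDiff_const.sub ((grEntryCD 0 1).div_const 2))
          (fun A hA => ((bp A 0 1 hA.2).2).ne'),
        fun A _ hn => Real.sqrt_pos.mpr (bp A 0 1 hn).2⟩
    · rw [grGamma_e2]
      exact ⟨grSqrtCD (g := fun A => 1/2 + A 1 2 / 2)
          (contDiff_const.add ((grEntryCD 1 2).div_const 2))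
          (fun A hA => ((bp A 1 2 hA.2).1).ne'),
        fun A _ hn => Real.sqrt_pos.mpr (bp A 1 2 hn).1⟩
    · rw [grGamma_e2']
      exact ⟨grSqrtCD (g := fun A => 1/2 - A 1 2 / 2)
          (contDiff_const.sub ((grEntryCD 1 2).div_const 2))
          (fun A hA => ((bp A 1 2 hA.2).2).ne'),
        fun A _ hn => Real.sqrt_pos.mpr (bp A 1 2 hn).2⟩
    · rw [grGamma_e3]
      exact ⟨grSqrtCD (g := fun A => 1/2 - A 0 2 / 2)
          (contDiff_const.sub ((grEntryCD 0 2).div_const 2))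
          (fun A hA => ((bp A 0 2 hA.2).2).ne'),
        fun A _ hn => Real.sqrt_pos.mpr (bp A 0 2 hn).2⟩
    · rw [grGamma_e3']
      exact ⟨grSqrtCD (g := fun A => 1/2 + A 0 2 / 2)
          (contDiff_const.add ((grEntryCD 0 2).div_const 2))
          (fun A hA => ((bp A 0 2 hA.2).1).ne'),
        fun A _ hn => Real.sqrt_pos.mpr (bp A 0 2 hn).1⟩
  · -- symmetric γ: smooth and positive
    intro ξ h
    simp only [Finset.mem_insert, Finset.mem_singleton] at h
    have bnd : ∀ A : Matrix (Fin 3) (Fin 3) ℝ, ‖A - 1‖ < 1/5 →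
        |A 0 0 - 1| < 1/5 ∧ |A 1 1 - 1| < 1/5 ∧ |A 2 2 - 1| < 1/5 ∧
        |A 0 1| < 1/5 ∧ |A 1 2| < 1/5 ∧ |A 0 2| < 1/5 := by
      intro A hn
      refine ⟨?_, ?_, ?_, ?_, ?_, ?_⟩
      · have := grEntryLe (A - 1) 0 0
        simp only [Matrix.sub_apply, Matrix.one_apply_eq] at this; linarith
      · have := grEntryLe (A - 1) 1 1
        simp only [Matrix.sub_apply, Matrix.one_apply_eq] at this; linarith
      · have := grEntryLe (A - 1) 2 2
        simp only [Matrix.sub_apply, Matrix.one_apply_eq] at this; linarith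
      · have := grEntryLe (A - 1) 0 1
        rw [Matrix.sub_apply, Matrix.one_apply_ne (by decide), sub_zero] at this; linarith
      · have := grEntryLe (A - 1) 1 2
        rw [Matrix.sub_apply, Matrix.one_apply_ne (by decide), sub_zero] at this; linarith
      · have := grEntryLe (A - 1) 0 2
        rw [Matrix.sub_apply, Matrix.one_apply_ne (by decide), sub_zero] at this; linarith
    have p1 : ∀ A : Matrix (Fin 3) (Fin 3) ℝ, ‖A - 1‖ < 1/5 →
        0 < (81 * A 0 0 + 256 * A 1 1 - 144 * A 2 2)/386 + 25/24 * A 0 1 ∧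
        0 < (81 * A 0 0 + 256 * A 1 1 - 144 * A 2 2)/386 - 25/24 * A 0 1 := by
      intro A hn
      obtain ⟨b0, b1, b2, b01, b12, b02⟩ := bnd A hn
      obtain ⟨d0, d0'⟩ := abs_lt.mp b0
      obtain ⟨d1, d1'⟩ := abs_lt.mp b1
      obtain ⟨d2, d2'⟩ := abs_lt.mp b2
      obtain ⟨e01, e01'⟩ := abs_lt.mp b01
      constructor <;> linarith
    have p2 : ∀ A : Matrix (Fin 3) (Fin 3) ℝ, ‖A - 1‖ < 1/5 →
        0 < (-144 * A 0 0 + 81 * A 1 1 + 256 * A 2 2)/386 + 25/24 * A 1 2 ∧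
        0 < (-144 * A 0 0 + 81 * A 1 1 + 256 * A 2 2)/386 - 25/24 * A 1 2 := by
      intro A hn
      obtain ⟨b0, b1, b2, b01, b12, b02⟩ := bnd A hn
      obtain ⟨d0, d0'⟩ := abs_lt.mp b0
      obtain ⟨d1, d1'⟩ := abs_lt.mp b1
      obtain ⟨d2, d2'⟩ := abs_lt.mp b2
      obtain ⟨e12, e12'⟩ := abs_lt.mp b12
      constructor <;> linarith
    have p3 : ∀ A : Matrix (Fin 3) (Fin 3) ℝ, ‖A - 1‖ < 1/5 →
        0 < (256 * A 0 0 - 144 * A 1 1 + 81 * A 2 2)/386 + 25/24 * A 0 2 ∧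
        0 < (256 * A 0 0 - 144 * A 1 1 + 81 * A 2 2)/386 - 25/24 * A 0 2 := by
      intro A hn
      obtain ⟨b0, b1, b2, b01, b12, b02⟩ := bnd A hn
      obtain ⟨d0, d0'⟩ := abs_lt.mp b0
      obtain ⟨d1, d1'⟩ := abs_lt.mp b1
      obtain ⟨d2, d2'⟩ := abs_lt.mp b2
      obtain ⟨e02, e02'⟩ := abs_lt.mp b02
      constructor <;> linarith
    have cd1 : ContDiff ℝ (⊤:ℕ∞)
        (fun A : Matrix (Fin 3) (Fin 3) ℝ => (81 * A 0 0 + 256 * A 1 1 - 144 * A 2 2)/386) :=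
      (((contDiff_const.mul (grEntryCD 0 0)).add
        (contDiff_const.mul (grEntryCD 1 1))).sub
        (contDiff_const.mul (grEntryCD 2 2))).div_const 386
    have cd2 : ContDiff ℝ (⊤:ℕ∞)
        (fun A : Matrix (Fin 3) (Fin 3) ℝ => (-144 * A 0 0 + 81 * A 1 1 + 256 * A 2 2)/386) :=
      (((contDiff_const.mul (grEntryCD 0 0)).add
        (contDiff_const.mul (grEntryCD 1 1))).add
        (contDiff_const.mul (grEntryCD 2 2))).div_const 386
    have cd3 : ContDiff ℝ (⊤:ℕ∞)
        (fun A : Matrix (Fin 3) (Fin 3) ℝ => (256 * A 0 0 - 144 * A 1 1 + 81 * A 2 2)/386) :=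
      (((contDiff_const.mul (grEntryCD 0 0)).sub
        (contDiff_const.mul (grEntryCD 1 1))).add
        (contDiff_const.mul (grEntryCD 2 2))).div_const 386
    rcases h with h|h|h|h|h|h <;> subst h
    · rw [grGamma_v1]
      exact ⟨grSqrtCD (g := fun A => (81 * A 0 0 + 256 * A 1 1 - 144 * A 2 2)/386 + 25/24 * A 0 1)
          (cd1.add (contDiff_const.mul (grEntryCD 0 1)))
          (fun A hA => ((p1 A hA.2).1).ne'),
        fun A _ hn => Real.sqrt_pos.mpr (p1 A hn).1⟩
    · rw [grGamma_v2]
      exact ⟨grSqrtCD (g := fun A => (81 * A 0 0 + 256 * A 1 1 - 144 * A 2 2)/386 - 25/24 * A 0 1)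
          (cd1.sub (contDiff_const.mul (grEntryCD 0 1)))
          (fun A hA => ((p1 A hA.2).2).ne'),
        fun A _ hn => Real.sqrt_pos.mpr (p1 A hn).2⟩
    · rw [grGamma_v3]
      exact ⟨grSqrtCD (g := fun A => (-144 * A 0 0 + 81 * A 1 1 + 256 * A 2 2)/386 + 25/24 * A 1 2)
          (cd2.add (contDiff_const.mul (grEntryCD 1 2)))
          (fun A hA => ((p2 A hA.2).1).ne'),
        fun A _ hn => Real.sqrt_pos.mpr (p2 A hn).1⟩
    · rw [grGamma_v4]
      exact ⟨grSqrtCD (g := fun A => (-144 * A 0 0 + 81 * A 1 1 + 256 * A 2 2)/386 - 25/24 * A 1 2)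
          (cd2.sub (contDiff_const.mul (grEntryCD 1 2)))
          (fun A hA => ((p2 A hA.2).2).ne'),
        fun A _ hn => Real.sqrt_pos.mpr (p2 A hn).2⟩
    · rw [grGamma_v5]
      exact ⟨grSqrtCD (g := fun A => (256 * A 0 0 - 144 * A 1 1 + 81 * A 2 2)/386 + 25/24 * A 0 2)
          (cd3.add (contDiff_const.mul (grEntryCD 0 2)))
          (fun A hA => ((p3 A hA.2).1).ne'),
        fun A _ hn => Real.sqrt_pos.mpr (p3 A hn).1⟩
    · rw [grGamma_v6]
      exact ⟨grSqrtCD (g := fun A => (256 * A 0 0 - 144 * A 1 1 + 81 * A 2 2)/386 - 25/24 * A 0 2)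
          (cd3.sub (contDiff_const.mul (grEntryCD 0 2)))
          (fun A hA => ((p3 A hA.2).2).ne'),
        fun A _ hn => Real.sqrt_pos.mpr (p3 A hn).2⟩
  · -- skew decomposition
    intro A hA hn
    rw [Finset.sum_insert (by norm_num [funext_iff, Fin.forall_fin_succ]),
        Finset.sum_insert (by norm_num [funext_iff, Fin.forall_fin_succ]),
        Finset.sum_insert (by norm_num [funext_iff, Fin.forall_fin_succ]),
        Finset.sum_insert (by norm_num [funext_iff, Fin.forall_fin_succ]),
        Finset.sum_insert (by norm_num [funext_iff, Fin.forall_fin_succ]),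
        Finset.sum_singleton]
    simp only [grGamma_e1, grGamma_e1', grGamma_e2, grGamma_e2', grGamma_e3, grGamma_e3',
      grE2_e1, grE2_e1', grE2_e2, grE2_e2', grE2_e3, grE2_e3']
    obtain ⟨c01, c01'⟩ := abs_lt.mp (lt_of_le_of_lt (grEntryLe A 0 1) hn)
    obtain ⟨c12, c12'⟩ := abs_lt.mp (lt_of_le_of_lt (grEntryLe A 1 2) hn)
    obtain ⟨c02, c02'⟩ := abs_lt.mp (lt_of_le_of_lt (grEntryLe A 0 2) hn)
    rw [Real.sq_sqrt (by linarith), Real.sq_sqrt (by linarith), Real.sq_sqrt (by linarith),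
        Real.sq_sqrt (by linarith), Real.sq_sqrt (by linarith), Real.sq_sqrt (by linarith)]
    have hs : ∀ i j, A j i = - A i j := fun i j => by
      have := congrFun (congrFun hA i) j
      simpa [Matrix.transpose_apply, Matrix.neg_apply] using this
    have s00 : A 0 0 = 0 := by have := hs 0 0; linarith
    have s11 : A 1 1 = 0 := by have := hs 1 1; linarith
    have s22 : A 2 2 = 0 := by have := hs 2 2; linarith
    have s10 : A 1 0 = -A 0 1 := hs 0 1
    have s20 : A 2 0 = -A 0 2 := hs 0 2
    have s21 : A 2 1 = -A 1 2 := hs 1 2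
    ext i j
    fin_cases i <;> fin_cases j <;>
      simp [outer, Matrix.add_apply, Matrix.smul_apply, Matrix.sub_apply, smul_eq_mul,
        s00, s11, s22, s10, s20, s21] <;> ring
  · -- symmetric decomposition
    intro A hA hn
    rw [Finset.sum_insert (by norm_num [funext_iff, Fin.forall_fin_succ]),
        Finset.sum_insert (by norm_num [funext_iff, Fin.forall_fin_succ]),
        Finset.sum_insert (by norm_num [funext_iff, Fin.forall_fin_succ]),
        Finset.sum_insert (by norm_num [funext_iff, Fin.forall_fin_succ]),
        Finset.sum_insert (by norm_num [funext_iff, Fin.forall_fin_succ]),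
        Finset.sum_singleton]
    simp only [grGamma_v1, grGamma_v2, grGamma_v3, grGamma_v4, grGamma_v5, grGamma_v6]
    have b00 : |A 0 0 - 1| < 1/5 := by
      have := grEntryLe (A - 1) 0 0
      simp only [Matrix.sub_apply, Matrix.one_apply_eq] at this; linarith
    have b11 : |A 1 1 - 1| < 1/5 := by
      have := grEntryLe (A - 1) 1 1
      simp only [Matrix.sub_apply, Matrix.one_apply_eq] at this; linarith
    have b22 : |A 2 2 - 1| < 1/5 := by
      have := grEntryLe (A - 1) 2 2
      simp only [Matrix.sub_apply, Matrix.one_apply_eq] at this; linarith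
    have b01 : |A 0 1| < 1/5 := by
      have := grEntryLe (A - 1) 0 1
      rw [Matrix.sub_apply, Matrix.one_apply_ne (by decide), sub_zero] at this; linarith
    have b12 : |A 1 2| < 1/5 := by
      have := grEntryLe (A - 1) 1 2
      rw [Matrix.sub_apply, Matrix.one_apply_ne (by decide), sub_zero] at this; linarith
    have b02 : |A 0 2| < 1/5 := by
      have := grEntryLe (A - 1) 0 2
      rw [Matrix.sub_apply, Matrix.one_apply_ne (by decide), sub_zero] at this; linarith
    obtain ⟨c00, c00'⟩ := abs_lt.mp b00
    obtain ⟨c11, c11'⟩ := abs_lt.mp b11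
    obtain ⟨c22, c22'⟩ := abs_lt.mp b22
    obtain ⟨c01, c01'⟩ := abs_lt.mp b01
    obtain ⟨c12, c12'⟩ := abs_lt.mp b12
    obtain ⟨c02, c02'⟩ := abs_lt.mp b02
    rw [Real.sq_sqrt (by linarith), Real.sq_sqrt (by linarith), Real.sq_sqrt (by linarith),
        Real.sq_sqrt (by linarith), Real.sq_sqrt (by linarith), Real.sq_sqrt (by linarith)]
    have hs : ∀ i j, A j i = A i j := fun i j => by
      have := congrFun (congrFun hA i) j
      simpa [Matrix.transpose_apply] using this
    have s10 : A 1 0 = A 0 1 := hs 0 1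
    have s20 : A 2 0 = A 0 2 := hs 0 2
    have s21 : A 2 1 = A 1 2 := hs 1 2
    ext i j
    fin_cases i <;> fin_cases j <;>
      simp [outer, Matrix.add_apply, Matrix.smul_apply, Matrix.sub_apply, smul_eq_mul,
        s10, s20, s21] <;> ring
  · -- integrality
    intro ξ h
    simp only [Finset.mem_insert, Finset.mem_singleton] at h
    rcases h with (h|h|h|h|h|h)|(h|h|h|h|h|h) <;> subst h
    · exact ⟨grInt 5 0 0 _ (by norm_num),
        by rw [grE1_e1]; exact grInt 0 0 5 _ (by norm_num),
        by rw [grE2_e1]; exact grInt 0 5 0 _ (by norm_num)⟩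
    · exact ⟨grInt (-5) 0 0 _ (by norm_num),
        by rw [grE1_e1']; exact grInt 0 0 (-5) _ (by norm_num),
        by rw [grE2_e1']; exact grInt 0 5 0 _ (by norm_num)⟩
    · exact ⟨grInt 0 5 0 _ (by norm_num),
        by rw [grE1_e2]; exact grInt 5 0 0 _ (by norm_num),
        by rw [grE2_e2]; exact grInt 0 0 5 _ (by norm_num)⟩
    · exact ⟨grInt 0 (-5) 0 _ (by norm_num),
        by rw [grE1_e2']; exact grInt (-5) 0 0 _ (by norm_num),
        by rw [grE2_e2']; exact grInt 0 0 5 _ (by norm_num)⟩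
    · exact ⟨grInt 0 0 5 _ (by norm_num),
        by rw [grE1_e3]; exact grInt 0 5 0 _ (by norm_num),
        by rw [grE2_e3]; exact grInt 5 0 0 _ (by norm_num)⟩
    · exact ⟨grInt 0 0 (-5) _ (by norm_num),
        by rw [grE1_e3']; exact grInt 0 (-5) 0 _ (by norm_num),
        by rw [grE2_e3']; exact grInt 5 0 0 _ (by norm_num)⟩
    · exact ⟨grInt 3 4 0 _ (by norm_num),
        by rw [grE1_v1]; exact grInt (-4) 3 0 _ (by norm_num),
        by rw [grE2_v1]; exact grInt 0 0 5 _ (by norm_num)⟩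
    · exact ⟨grInt 3 (-4) 0 _ (by norm_num),
        by rw [grE1_v2]; exact grInt 4 3 0 _ (by norm_num),
        by rw [grE2_v2]; exact grInt 0 0 5 _ (by norm_num)⟩
    · exact ⟨grInt 0 3 4 _ (by norm_num),
        by rw [grE1_v3]; exact grInt 0 (-4) 3 _ (by norm_num),
        by rw [grE2_v3]; exact grInt 5 0 0 _ (by norm_num)⟩
    · exact ⟨grInt 0 3 (-4) _ (by norm_num),
        by rw [grE1_v4]; exact grInt 0 4 3 _ (by norm_num),
        by rw [grE2_v4]; exact grInt 5 0 0 _ (by norm_num)⟩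
    · exact ⟨grInt 4 0 3 _ (by norm_num),
        by rw [grE1_v5]; exact grInt 3 0 (-4) _ (by norm_num),
        by rw [grE2_v5]; exact grInt 0 5 0 _ (by norm_num)⟩
    · exact ⟨grInt (-4) 0 3 _ (by norm_num),
        by rw [grE1_v6]; exact grInt 3 0 4 _ (by norm_num),
        by rw [grE2_v6]; exact grInt 0 5 0 _ (by norm_num)⟩
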